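/- If A : [t₀,∞) → M_m(ℝ) is of class C¹ and B : [t₀,∞) → M_m(ℝ) is continuous, then the system ẍ + A(t)ẋ + B(t)x = 0 is L₀-equivalent to some system ξ̈ + V(t)ξ̇ + W(t)ξ = 0 with V, W continuous on [t₀,∞) and V(t) = V(t)ᵀ for all t ≥ t₀. -/

import Mathlib

open Matrix Set intervalIntegral

attribute [local instance] Matrix.frobeniusNormedAddCommGroup Matrix.frobeniusNormedSpace

/-- An `L_k`-matrix on `[t₀,∞)`: a `C²` matrix function with `|det L(t)| ≥ η > 0` and
`sup_{t ≥ t₀} ‖(dⁱ/dtⁱ)L(t)‖ < ∞` for every `0 ≤ i ≤ k`. -/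
def IsLkMatrix (t₀ : ℝ) (k : ℕ) {m : ℕ} (L : ℝ → Matrix (Fin m) (Fin m) ℝ) : Prop :=
  ContDiffOn ℝ 2 L (Ici t₀) ∧
  (∃ η > (0:ℝ), ∀ t ∈ Ici t₀, η ≤ |(L t).det|) ∧
  (∀ i ≤ k, ∃ M : ℝ, ∀ t ∈ Ici t₀, ‖iteratedDerivWithin i L (Ici t₀) t‖ ≤ M)

/-- The system `ẍ + A(t)ẋ + B(t)x = 0` is `L_k`-equivalent to `ξ̈ + V(t)ξ̇ + W(t)ξ = 0`:
there is an `L_k`-matrix `L` with `V(t) = L(t)⁻¹(2L̇(t) + A(t)L(t))` and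
`W(t) = L(t)⁻¹(L̈(t) + A(t)L̇(t) + B(t)L(t))` for all `t ≥ t₀`. -/
def LkEquiv (t₀ : ℝ) (k : ℕ) {m : ℕ} (A B V W : ℝ → Matrix (Fin m) (Fin m) ℝ) : Prop :=
  ∃ L : ℝ → Matrix (Fin m) (Fin m) ℝ, IsLkMatrix t₀ k L ∧
    ∀ t ∈ Ici t₀,
      V t = (L t)⁻¹ * ((2:ℝ) • derivWithin L (Ici t₀) t + A t * L t) ∧
      W t = (L t)⁻¹ * (derivWithin (derivWithin L (Ici t₀)) (Ici t₀) t
              + A t * derivWithin L (Ici t₀) t + B t * L t)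

/-- `Λ(t) = 2∫_{t₀}^t S(ν) dν + S₀`. -/
noncomputable def Lam (t₀ : ℝ) {m : ℕ} (S : ℝ → Matrix (Fin m) (Fin m) ℝ)
    (S₀ : Matrix (Fin m) (Fin m) ℝ) (t : ℝ) : Matrix (Fin m) (Fin m) ℝ :=
  (2:ℝ) • (∫ ν in t₀..t, S ν) + S₀

-- ------------------------------------------------------------------------
-- Auxiliary development: global solution of the linear matrix ODE
-- `L' = G L`, `L t₀ = 1`, via Picard iteration.
-- ------------------------------------------------------------------------

attribute [local instance] Matrix.frobeniusNormedRing Matrix.frobeniusNormedAlgebra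

noncomputable instance frobContENorm {m : ℕ} : ContinuousENorm (Matrix (Fin m) (Fin m) ℝ) :=
  @SeminormedAddGroup.toContinuousENorm _
    Matrix.frobeniusNormedAddCommGroup.toSeminormedAddCommGroup.toSeminormedAddGroup

noncomputable instance frobENormedAddMonoid {m : ℕ} : ENormedAddMonoid (Matrix (Fin m) (Fin m) ℝ) :=
  @NormedAddGroup.toENormedAddMonoid _ Matrix.frobeniusNormedAddCommGroup.toNormedAddGroup

instance frobPseudoMetrizable {m : ℕ} :
    TopologicalSpace.PseudoMetrizableSpace (Matrix (Fin m) (Fin m) ℝ) :=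
  TopologicalSpace.pseudoMetrizableSpace_pi

open Nat MeasureTheory

namespace Stmt3Aux

variable {m : ℕ}

/-- Picard iterates for the linear ODE `L' = G L`, `L t₀ = 1`. -/
noncomputable def picard (t₀ : ℝ) (G : ℝ → Matrix (Fin m) (Fin m) ℝ) :
    ℕ → ℝ → Matrix (Fin m) (Fin m) ℝ
  | 0 => fun _ => 1
  | (n + 1) => fun t => ∫ s in t₀..t, G s * picard t₀ G n s


theorem picard_cont (t₀ : ℝ) {G : ℝ → Matrix (Fin m) (Fin m) ℝ} (hG : Continuous G) (n : ℕ) :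
    Continuous (picard t₀ G n) := by
  induction n with
  | zero => exact continuous_const
  | succ n ih =>
    exact intervalIntegral.continuous_primitive
      (fun a b => ((hG.mul ih)).intervalIntegrable a b) t₀


theorem picard_bound (t₀ : ℝ) {G : ℝ → Matrix (Fin m) (Fin m) ℝ} {t₁ C : ℝ}
    (hC : ∀ s ∈ Icc t₀ t₁, ‖G s‖ ≤ C) (hC0 : 0 ≤ C) (n : ℕ) :
    ∀ t ∈ Icc t₀ t₁,
      ‖picard t₀ G n t‖ ≤ ‖(1 : Matrix (Fin m) (Fin m) ℝ)‖ * (C * (t - t₀)) ^ n / n ! := by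
  induction n with
  | zero => intro t ht; simp [picard]
  | succ n ih =>
    intro t ht
    have h01 : t₀ ≤ t := ht.1
    set c : ℝ := ‖(1 : Matrix (Fin m) (Fin m) ℝ)‖ * C ^ (n + 1) / n ! with hc
    have hc0 : 0 ≤ c := by positivity
    have key : ‖picard t₀ G (n + 1) t‖ ≤ |∫ s in t₀..t, c * (s - t₀) ^ n| := by
      show ‖∫ s in t₀..t, G s * picard t₀ G n s‖ ≤ _
      apply intervalIntegral.norm_integral_le_abs_of_norm_le
      · filter_upwards [MeasureTheory.ae_restrict_mem measurableSet_uIoc] with s hs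
        rw [Set.uIoc_of_le h01] at hs
        have hs' : s ∈ Icc t₀ t₁ := ⟨hs.1.le, hs.2.trans ht.2⟩
        calc ‖G s * picard t₀ G n s‖ ≤ ‖G s‖ * ‖picard t₀ G n s‖ :=
              Matrix.frobenius_norm_mul _ _
          _ ≤ C * (‖(1 : Matrix (Fin m) (Fin m) ℝ)‖ * (C * (s - t₀)) ^ n / n !) := by
              have h1 := hC s hs'
              have h2 := ih s hs'
              have h3 : (0:ℝ) ≤ ‖picard t₀ G n s‖ := norm_nonneg _
              have h4 : (0:ℝ) ≤ ‖(1 : Matrix (Fin m) (Fin m) ℝ)‖ * (C * (s - t₀)) ^ n / n ! := by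
                have : (0:ℝ) ≤ C * (s - t₀) := by
                  have := hs.1.le; nlinarith
                positivity
              nlinarith [norm_nonneg (G s)]
          _ = c * (s - t₀) ^ n := by rw [hc]; rw [mul_pow]; field_simp; ring
      · apply ContinuousOn.intervalIntegrable
        fun_prop
    have hint : ∫ s in t₀..t, c * (s - t₀) ^ n = c * ((t - t₀) ^ (n + 1) / (n + 1)) := by
      rw [intervalIntegral.integral_const_mul]
      have : (∫ s in t₀..t, (s - t₀) ^ n) = ∫ x in t₀ - t₀..t - t₀, x ^ n :=
        intervalIntegral.integral_comp_sub_right (fun x => x ^ n) t₀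
      rw [this, sub_self, integral_pow]
      simp
    rw [hint] at key
    have habs : |c * ((t - t₀) ^ (n + 1) / (n + 1))| = c * ((t - t₀) ^ (n + 1) / (n + 1)) := by
      apply abs_of_nonneg
      have : (0:ℝ) ≤ t - t₀ := by linarith
      positivity
    rw [habs] at key
    refine key.trans (le_of_eq ?_)
    rw [hc, Nat.factorial_succ, mul_pow]
    push_cast
    field_simp


/-- The solution of `L' = G L`, `L t₀ = 1`, as a series of Picard iterates. -/
noncomputable def picardSum (t₀ : ℝ) (G : ℝ → Matrix (Fin m) (Fin m) ℝ) (t : ℝ) :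
    Matrix (Fin m) (Fin m) ℝ :=
  ∑' n, picard t₀ G n t


theorem usummable (a x : ℝ) : Summable fun n : ℕ => a * x ^ n / n ! := by
  simpa [mul_div_assoc] using (Real.summable_pow_div_factorial x).mul_left a


theorem picard_summable (t₀ : ℝ) {G : ℝ → Matrix (Fin m) (Fin m) ℝ} {t₁ C : ℝ}
    (hC : ∀ s ∈ Icc t₀ t₁, ‖G s‖ ≤ C) (hC0 : 0 ≤ C) {t : ℝ} (ht : t ∈ Icc t₀ t₁) :
    Summable fun n => picard t₀ G n t := by
  apply Summable.of_norm_bounded (usummable ‖(1 : Matrix (Fin m) (Fin m) ℝ)‖ (C * (t - t₀)))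
  intro n
  simpa [mul_div_assoc] using picard_bound t₀ hC hC0 n t ht


theorem picardSum_t₀ (t₀ : ℝ) (G : ℝ → Matrix (Fin m) (Fin m) ℝ) :
    picardSum t₀ G t₀ = 1 := by
  have : ∀ n : ℕ, n ≠ 0 → picard t₀ G n t₀ = 0 := by
    rintro (_ | n) h
    · exact absurd rfl h
    · show (∫ s in t₀..t₀, G s * picard t₀ G n s) = 0
      simp
  rw [picardSum, tsum_eq_single 0 this]
  rfl


theorem picardSum_contOn (t₀ : ℝ) {G : ℝ → Matrix (Fin m) (Fin m) ℝ} (hG : Continuous G) :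
    ContinuousOn (picardSum t₀ G) (Ici t₀) := by
  intro t ht
  obtain ⟨C, hC⟩ := (isCompact_Icc : IsCompact (Icc t₀ (t + 1))).exists_bound_of_continuousOn
    hG.continuousOn
  have ht' : t₀ ≤ t := ht
  have hC0 : 0 ≤ C := le_trans (norm_nonneg _) (hC t₀ ⟨le_rfl, by linarith⟩)
  have hb0 : 0 ≤ C * (t + 1 - t₀) := by nlinarith
  have hcont : ContinuousOn (picardSum t₀ G) (Icc t₀ (t + 1)) := by
    apply continuousOn_tsum (fun n => (picard_cont t₀ hG n).continuousOn)
      (usummable ‖(1 : Matrix (Fin m) (Fin m) ℝ)‖ (C * (t + 1 - t₀)))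
    intro n x hx
    refine (picard_bound t₀ hC hC0 n x hx).trans ?_
    have h1 : (C * (x - t₀)) ^ n ≤ (C * (t + 1 - t₀)) ^ n := by
      apply pow_le_pow_left₀ (by nlinarith [hx.1]) (by nlinarith [hx.1, hx.2])
    rw [div_eq_mul_inv, div_eq_mul_inv]
    apply mul_le_mul_of_nonneg_right _ (by positivity)
    exact mul_le_mul_of_nonneg_left h1 (norm_nonneg _)
  refine (hcont t ⟨ht', by linarith⟩).mono_of_mem_nhdsWithin ?_
  rw [mem_nhdsWithin]
  exact ⟨Iio (t + 1), isOpen_Iio, by simpa using (by linarith : t < t + 1),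
    fun y hy => ⟨hy.2, le_of_lt hy.1⟩⟩


theorem picardSum_eq (t₀ : ℝ) {G : ℝ → Matrix (Fin m) (Fin m) ℝ} (hG : Continuous G)
    {t : ℝ} (ht : t₀ ≤ t) :
    picardSum t₀ G t = 1 + ∫ s in t₀..t, G s * picardSum t₀ G s := by
  obtain ⟨C, hC⟩ := (isCompact_Icc : IsCompact (Icc t₀ t)).exists_bound_of_continuousOn
    hG.continuousOn
  have hC0 : 0 ≤ C := le_trans (norm_nonneg _) (hC t₀ ⟨le_rfl, ht⟩)
  set u : ℕ → ℝ := fun n => ‖(1 : Matrix (Fin m) (Fin m) ℝ)‖ * (C * (t - t₀)) ^ n / n ! with hu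
  -- pointwise: multiply the series by `G s`
  have hmul : ∀ s ∈ Icc t₀ t, G s * picardSum t₀ G s = ∑' n, G s * picard t₀ G n s := by
    intro s hs
    exact ((picard_summable t₀ hC hC0 hs).tsum_mul_left (G s)).symm
  -- swap sum and integral
  have hFint : ∀ n : ℕ, IntegrableOn (fun s => G s * picard t₀ G n s) (Ioc t₀ t) := fun n =>
    ((hG.mul (picard_cont t₀ hG n)).integrableOn_Ioc)
  have hswap : (∑' n, ∫ s in Ioc t₀ t, G s * picard t₀ G n s)
      = ∫ s in Ioc t₀ t, ∑' n, G s * picard t₀ G n s := by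
    apply MeasureTheory.integral_tsum_of_summable_integral_norm
      (fun n => hFint n)
    -- summability of the integrals of norms
    have hvol : (volume (Ioc t₀ t)).toReal = t - t₀ := by
      rw [Real.volume_Ioc, ENNReal.toReal_ofReal (by linarith)]
    apply Summable.of_nonneg_of_le
      (fun n => integral_nonneg fun s => norm_nonneg _)
      (fun n => ?_)
      (((usummable ‖(1 : Matrix (Fin m) (Fin m) ℝ)‖ (C * (t - t₀))).mul_left C).mul_right
        (t - t₀))
    have hbd : ∀ s ∈ Ioc t₀ t, ‖‖G s * picard t₀ G n s‖‖ ≤ C * u n := by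
      intro s hs
      have hs' : s ∈ Icc t₀ t := ⟨hs.1.le, hs.2⟩
      rw [norm_norm]
      calc ‖G s * picard t₀ G n s‖ ≤ ‖G s‖ * ‖picard t₀ G n s‖ := Matrix.frobenius_norm_mul _ _
        _ ≤ C * u n := by
            apply mul_le_mul (hC s hs') ?_ (norm_nonneg _) hC0
            have := picard_bound t₀ hC hC0 n s hs'
            refine this.trans ?_
            show _ ≤ ‖(1 : Matrix (Fin m) (Fin m) ℝ)‖ * (C * (t - t₀)) ^ n / (n ! : ℝ)
            rw [div_eq_mul_inv, div_eq_mul_inv]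
            apply mul_le_mul_of_nonneg_right _ (by positivity)
            apply mul_le_mul_of_nonneg_left _ (norm_nonneg _)
            apply pow_le_pow_left₀ (by nlinarith [hs.1.le]) (by nlinarith [hs.2])
    calc (∫ s in Ioc t₀ t, ‖G s * picard t₀ G n s‖)
        ≤ ‖∫ s in Ioc t₀ t, ‖G s * picard t₀ G n s‖‖ := le_abs_self _
      _ ≤ C * u n * (volume (Ioc t₀ t)).toReal := by
          apply MeasureTheory.norm_setIntegral_le_of_norm_le_const
            (by rw [Real.volume_Ioc]; exact ENNReal.ofReal_lt_top) hbd
      _ = C * u n * (t - t₀) := by rw [hvol]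
  -- now compute
  have hIoc : ∀ (f : ℝ → Matrix (Fin m) (Fin m) ℝ),
      (∫ s in t₀..t, f s) = ∫ s in Ioc t₀ t, f s := fun f =>
    intervalIntegral.integral_of_le ht
  have hsummt : Summable fun n => picard t₀ G n t :=
    picard_summable t₀ hC hC0 ⟨ht, le_rfl⟩
  calc picardSum t₀ G t = picard t₀ G 0 t + ∑' n, picard t₀ G (n + 1) t :=
        Summable.tsum_eq_zero_add hsummt
    _ = 1 + ∑' n, ∫ s in Ioc t₀ t, G s * picard t₀ G n s := by
        congr 1
        exact tsum_congr fun n => hIoc _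
    _ = 1 + ∫ s in Ioc t₀ t, ∑' n, G s * picard t₀ G n s := by rw [hswap]
    _ = 1 + ∫ s in Ioc t₀ t, G s * picardSum t₀ G s := by
        congr 1
        apply MeasureTheory.setIntegral_congr_fun measurableSet_Ioc
        intro s hs
        exact (hmul s ⟨hs.1.le, hs.2⟩).symm
    _ = 1 + ∫ s in t₀..t, G s * picardSum t₀ G s := by rw [hIoc]


theorem picardSum_hasDeriv (t₀ : ℝ) {G : ℝ → Matrix (Fin m) (Fin m) ℝ} (hG : Continuous G)
    {t : ℝ} (ht : t ∈ Ici t₀) :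
    HasDerivWithinAt (picardSum t₀ G) (G t * picardSum t₀ G t) (Ici t₀) t := by
  have ht' : t₀ ≤ t := ht
  set g : ℝ → Matrix (Fin m) (Fin m) ℝ := fun s => G s * picardSum t₀ G s with hg
  have hgc : ContinuousOn g (Ici t₀) := hG.continuousOn.mul (picardSum_contOn t₀ hG)
  have hmeasI : AEStronglyMeasurable g (MeasureTheory.volume.restrict (Ici t₀)) :=
    hgc.aestronglyMeasurable measurableSet_Ici
  have hint : IntervalIntegrable g MeasureTheory.volume t₀ t :=
    (hgc.mono (by rw [uIcc_of_le ht']; exact Icc_subset_Ici_self)).intervalIntegrable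
  have hprim : HasDerivWithinAt (fun u => 1 + ∫ s in t₀..u, g s) (g t) (Ici t₀) t := by
    apply HasDerivWithinAt.const_add
    rcases eq_or_lt_of_le ht' with heq | hlt
    · subst heq
      exact intervalIntegral.integral_hasDerivWithinAt_right hint
        ⟨Ici t₀, Filter.mem_of_superset self_mem_nhdsWithin Ioi_subset_Ici_self, hmeasI⟩
        ((hgc t₀ self_mem_Ici).mono Ioi_subset_Ici_self)
    · exact (intervalIntegral.integral_hasDerivAt_right hint
        ⟨Ici t₀, Ici_mem_nhds hlt, hmeasI⟩
        ((hgc t ht).continuousAt (Ici_mem_nhds hlt))).hasDerivWithinAt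
  exact hprim.congr (fun x hx => picardSum_eq t₀ hG hx) (picardSum_eq t₀ hG ht')


end Stmt3Aux

open Stmt3Aux

/-- If `A` is `C¹` and `B` is continuous on `[t₀,∞)`, then the system
`ẍ + A(t)ẋ + B(t)x = 0` is `L₀`-equivalent to some system `ξ̈ + V(t)ξ̇ + W(t)ξ = 0`
with `V, W` continuous and `V(t)` symmetric for all `t ≥ t₀`. -/
theorem stmt_3 {m : ℕ} (t₀ : ℝ) (A B : ℝ → Matrix (Fin m) (Fin m) ℝ)
    (hA : ContDiffOn ℝ 1 A (Ici t₀)) (hB : ContinuousOn B (Ici t₀)) :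
    ∃ V W : ℝ → Matrix (Fin m) (Fin m) ℝ,
      ContinuousOn V (Ici t₀) ∧ ContinuousOn W (Ici t₀) ∧
      (∀ t ∈ Ici t₀, (V t)ᵀ = V t) ∧ LkEquiv t₀ 0 A B V W := by
  have hAc : ContinuousOn A (Ici t₀) := hA.continuousOn
  -- transpose as a continuous linear map
  let Tc : Matrix (Fin m) (Fin m) ℝ →L[ℝ] Matrix (Fin m) (Fin m) ℝ :=
    LinearMap.toContinuousLinearMap
      (Matrix.transposeLinearEquiv (Fin m) (Fin m) ℝ ℝ).toLinearMap
  have hTcC : Continuous fun X : Matrix (Fin m) (Fin m) ℝ => Xᵀ := Tc.continuous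
  -- the skew part driving the ODE
  set G : ℝ → Matrix (Fin m) (Fin m) ℝ :=
    fun t => (4 : ℝ)⁻¹ • ((A (max t t₀))ᵀ - A (max t t₀)) with hGdef
  have hAmax : Continuous fun t : ℝ => A (max t t₀) :=
    hAc.comp_continuous (continuous_id.max continuous_const) fun t => (le_max_right _ _ : t₀ ≤ max t t₀)
  have hG : Continuous G := ((hTcC.comp hAmax).sub hAmax).const_smul ((4 : ℝ)⁻¹)
  have hGskew : ∀ t, (G t)ᵀ = -G t := by
    intro t
    simp [hGdef, transpose_smul, transpose_sub, smul_sub, neg_sub]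
  have hGIci : ∀ t ∈ Ici t₀, G t = (4 : ℝ)⁻¹ • ((A t)ᵀ - A t) := by
    intro t ht
    simp [hGdef, max_eq_left (mem_Ici.mp ht)]
  set L : ℝ → Matrix (Fin m) (Fin m) ℝ := picardSum t₀ G with hLdef
  have hLc : ContinuousOn L (Ici t₀) := picardSum_contOn t₀ hG
  have hLder : ∀ t ∈ Ici t₀, HasDerivWithinAt L (G t * L t) (Ici t₀) t := fun t ht =>
    picardSum_hasDeriv t₀ hG ht
  have hUD : UniqueDiffOn ℝ (Ici t₀) := uniqueDiffOn_Ici t₀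
  have hLdW : ∀ t ∈ Ici t₀, derivWithin L (Ici t₀) t = G t * L t := fun t ht =>
    (hLder t ht).derivWithin (hUD t ht)
  have hLdiff : DifferentiableOn ℝ L (Ici t₀) := fun t ht =>
    (hLder t ht).differentiableWithinAt
  have hL1 : ContDiffOn ℝ 1 L (Ici t₀) := by
    rw [show (1 : WithTop ℕ∞) = 0 + 1 from (zero_add 1).symm,
      contDiffOn_succ_iff_derivWithin hUD]
    refine ⟨hLdiff, by simp, ?_⟩
    rw [contDiffOn_zero]
    exact ContinuousOn.congr (hG.continuousOn.mul hLc) hLdW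
  have hGC1 : ContDiffOn ℝ 1 G (Ici t₀) := by
    have h1 : ContDiffOn ℝ 1 (fun t => (4 : ℝ)⁻¹ • ((A t)ᵀ - A t)) (Ici t₀) :=
      ((Tc.contDiff.comp_contDiffOn hA).sub hA).const_smul _
    exact h1.congr hGIci
  have hgl1 : ContDiffOn ℝ 1 (fun t => G t * L t) (Ici t₀) := hGC1.mul hL1
  have hL2 : ContDiffOn ℝ 2 L (Ici t₀) := by
    rw [show (2 : WithTop ℕ∞) = 1 + 1 from one_add_one_eq_two.symm,
      contDiffOn_succ_iff_derivWithin hUD]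
    exact ⟨hLdiff, by simp, hgl1.congr hLdW⟩
  -- orthogonality
  have horth : ∀ t ∈ Ici t₀, (L t)ᵀ * L t = 1 := by
    have hders : ∀ t ∈ Ici t₀, HasDerivWithinAt (fun s => (L s)ᵀ * L s) 0 (Ici t₀) t := by
      intro t ht
      have h1 : HasDerivWithinAt (fun s => (L s)ᵀ) ((G t * L t)ᵀ) (Ici t₀) t :=
        Tc.hasFDerivAt.comp_hasDerivWithinAt t (hLder t ht)
      have h2 := h1.mul (hLder t ht)
      refine h2.congr_deriv ?_
      rw [transpose_mul, hGskew t]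
      simp [Matrix.mul_assoc, Matrix.neg_mul, Matrix.mul_neg]
    have hdiffF : DifferentiableOn ℝ (fun s => (L s)ᵀ * L s) (Ici t₀) := fun t ht =>
      (hders t ht).differentiableWithinAt
    have hconst : ∀ t ∈ Ici t₀, (L t)ᵀ * L t = (L t₀)ᵀ * L t₀ := by
      intro t ht
      apply (convex_Ici t₀).is_const_of_fderivWithin_eq_zero hdiffF ?_ ht self_mem_Ici
      intro x hx
      have h0 := (hders x hx).hasFDerivWithinAt.fderivWithin (hUD x hx)
      refine h0.trans ?_
      ext y
      simp
      rfl
    intro t ht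
    rw [hconst t ht, hLdef, picardSum_t₀]
    simp
  have hinv : ∀ t ∈ Ici t₀, (L t)⁻¹ = (L t)ᵀ := fun t ht =>
    Matrix.inv_eq_left_inv (horth t ht)
  have hdet : ∀ t ∈ Ici t₀, (1:ℝ) ≤ |(L t).det| := by
    intro t ht
    have h := congrArg Matrix.det (horth t ht)
    rw [Matrix.det_mul, Matrix.det_transpose, Matrix.det_one] at h
    rcases mul_self_eq_one_iff.mp h with h1 | h1 <;> rw [h1] <;> norm_num
  have hnorm : ∀ t ∈ Ici t₀, ‖L t‖ ≤ Real.sqrt m := by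
    intro t ht
    have hdiag : ∀ j, ∑ i, L t i j * L t i j = 1 := by
      intro j
      have := congrFun (congrFun (horth t ht) j) j
      simpa [Matrix.mul_apply, Matrix.transpose_apply, Matrix.one_apply] using this
    have hsum : ∑ i, ∑ j, ‖L t i j‖ ^ (2:ℝ) = (m : ℝ) := by
      rw [Finset.sum_comm]
      calc ∑ j, ∑ i, ‖L t i j‖ ^ (2:ℝ) = ∑ _j : Fin m, (1:ℝ) := by
            apply Finset.sum_congr rfl
            intro j _
            calc ∑ i, ‖L t i j‖ ^ (2:ℝ) = ∑ i, L t i j * L t i j := by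
                  apply Finset.sum_congr rfl
                  intro i _
                  rw [show (2:ℝ) = ((2:ℕ):ℝ) by norm_num, Real.rpow_natCast, pow_two,
                    Real.norm_eq_abs, abs_mul_abs_self]
              _ = 1 := hdiag j
        _ = (m : ℝ) := by simp
    rw [Matrix.frobenius_norm_def, hsum, ← Real.sqrt_eq_rpow]
  -- the symmetric part of A
  set Ssym : ℝ → Matrix (Fin m) (Fin m) ℝ := fun t => (2 : ℝ)⁻¹ • (A t + (A t)ᵀ) with hSdef
  have hSc : ContinuousOn Ssym (Ici t₀) :=
    (hAc.add (hTcC.comp_continuousOn hAc)).const_smul ((2 : ℝ)⁻¹)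
  have hSsymm : ∀ t, (Ssym t)ᵀ = Ssym t := by
    intro t
    simp [hSdef, transpose_smul, transpose_add, add_comm]
  have hLTc : ContinuousOn (fun t => (L t)ᵀ) (Ici t₀) := hTcC.comp_continuousOn hLc
  have hVeq : ∀ t ∈ Ici t₀,
      (L t)⁻¹ * ((2:ℝ) • derivWithin L (Ici t₀) t + A t * L t)
        = (L t)ᵀ * (Ssym t * L t) := by
    intro t ht
    rw [hinv t ht, hLdW t ht, hGIci t ht]
    congr 1
    rw [hSdef]
    simp only [Matrix.smul_mul, Matrix.sub_mul, Matrix.add_mul, smul_smul]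
    module
  -- V and W
  refine ⟨fun t => (L t)⁻¹ * ((2:ℝ) • derivWithin L (Ici t₀) t + A t * L t),
    fun t => (L t)⁻¹ * (derivWithin (derivWithin L (Ici t₀)) (Ici t₀) t
      + A t * derivWithin L (Ici t₀) t + B t * L t), ?_, ?_, ?_, ?_⟩
  pick_goal 4
  · refine ⟨L, ⟨hL2, ⟨1, one_pos, hdet⟩, ?_⟩, fun t ht => ⟨rfl, rfl⟩⟩
    intro i hi
    obtain rfl := Nat.le_zero.mp hi
    exact ⟨Real.sqrt m, fun t ht => by rw [iteratedDerivWithin_zero]; exact hnorm t ht⟩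
  -- continuity of V
  · exact ContinuousOn.congr (hLTc.mul (hSc.mul hLc)) hVeq
  -- continuity of W
  · have hD2eq : ∀ t ∈ Ici t₀, derivWithin (derivWithin L (Ici t₀)) (Ici t₀) t
        = derivWithin (fun s => G s * L s) (Ici t₀) t := fun t ht =>
      derivWithin_congr hLdW (hLdW t ht)
    have hD2c : ContinuousOn (derivWithin (fun s => G s * L s) (Ici t₀)) (Ici t₀) := by
      rw [show (1 : WithTop ℕ∞) = 0 + 1 from (zero_add 1).symm,
        contDiffOn_succ_iff_derivWithin hUD] at hgl1
      have h := hgl1.2.2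
      rwa [contDiffOn_zero] at h
    have hWeq : ∀ t ∈ Ici t₀,
        (L t)⁻¹ * (derivWithin (derivWithin L (Ici t₀)) (Ici t₀) t
            + A t * derivWithin L (Ici t₀) t + B t * L t)
          = (L t)ᵀ * (derivWithin (fun s => G s * L s) (Ici t₀) t
            + A t * (G t * L t) + B t * L t) := by
      intro t ht
      rw [hinv t ht, hLdW t ht, hD2eq t ht]
    exact ContinuousOn.congr
      (hLTc.mul ((hD2c.add (hAc.mul (hG.continuousOn.mul hLc))).add (hB.mul hLc))) hWeq
  -- symmetry of V
  · intro t ht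
    beta_reduce
    rw [hVeq t ht, transpose_mul, transpose_mul, hSsymm t, transpose_transpose,
      Matrix.mul_assoc]
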